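/- Fix n ≥ 2, 1 ≤ k ≤ n−1, and θ ∈ [0, π/2]. Suppose the distribution function F belongs to the class L_{1,γ} with γ ∈ (0,∞), i.e. q(t) = ℓ(t)/t where ℓ is slowly varying with ℓ(t) → γ. Then, as c → +∞, D_k(θ, c) = ∫_0^{cos²θ} exp(−∫_{c²}^{c²/y} q(t) dt)·f_k(y) dy converges to a_{γ,k}·Pr(B̃_{γ,k} < cos²θ), where a_{γ,k} = B(γ + k/2, (n−k)/2)/B(k/2, (n−k)/2) and B̃_{γ,k} is a Beta(γ + k/2, (n−k)/2)-distributed random variable. -/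

import Mathlib

open Filter MeasureTheory Real Topology

/-- A function `ℓ` is slowly varying if `ℓ(λ x)/ℓ(x) → 1` as `x → ∞` for every `λ > 0`. -/
def SlowlyVarying (ℓ : ℝ → ℝ) : Prop :=
  ∀ lam : ℝ, 0 < lam → Tendsto (fun x => ℓ (lam * x) / ℓ x) atTop (nhds 1)

lemma realBeta_left {p : ℝ} (hp : 0 < p) (q : ℝ) :
    IntervalIntegrable (fun x : ℝ => x ^ (p - 1) * (1 - x) ^ (q - 1)) volume 0 (1 / 2) := by
  apply IntervalIntegrable.mul_continuousOn
  · exact intervalIntegral.intervalIntegrable_rpow' (by linarith)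
  · apply continuousOn_of_forall_continuousAt
    intro x hx
    rw [Set.uIcc_of_le (by norm_num : (0 : ℝ) ≤ 1 / 2)] at hx
    have h1 : (1 : ℝ) - x ≠ 0 := by
      have := hx.2; intro h; rw [sub_eq_zero] at h; rw [← h] at this; norm_num at this
    exact (Real.continuousAt_rpow_const _ _ (Or.inl h1)).comp
      ((continuous_const.sub continuous_id).continuousAt)

lemma realBeta_intervalIntegrable {p q : ℝ} (hp : 0 < p) (hq : 0 < q) :
    IntervalIntegrable (fun x : ℝ => x ^ (p - 1) * (1 - x) ^ (q - 1)) volume 0 1 := by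
  refine (realBeta_left hp q).trans ?_
  rw [IntervalIntegrable.iff_comp_neg]
  convert ((realBeta_left hq p).comp_add_right 1).symm using 1
  · ext1 x
    conv_lhs => rw [mul_comm]
    congr 2 <;> ring
  · norm_num
  · norm_num

set_option maxHeartbeats 1000000 in

/-- Fix `n ≥ 2`, `1 ≤ k ≤ n-1` and `θ ∈ [0,π/2]`.  If `F ∈ L_{1,γ}`
with `γ ∈ (0,∞)`, i.e. `q(t) = ℓ(t)/t` with `ℓ` slowly varying and `ℓ(t) → γ`, then
`D_k(θ,c) = ∫_0^{cos²θ} exp(-∫_{c²}^{c²/y} q) f_k(y) dy` converges, as `c → ∞`, to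
`a_{γ,k}·Pr(B̃_{γ,k} < cos²θ)`, where `a_{γ,k} = B(γ+k/2,(n-k)/2)/B(k/2,(n-k)/2)`
and `B̃_{γ,k} ~ Beta(γ+k/2,(n-k)/2)` (so that the probability is the integral of the
Beta(γ+k/2,(n-k)/2) density over `(0, cos²θ)`); here `f_k` is the Beta(k/2,(n-k)/2)
density and `B(p,q) = Γ(p)Γ(q)/Γ(p+q)`. -/
theorem Dk_limit_regularly_varying
    (n k : ℕ) (hn : 2 ≤ n) (hk1 : 1 ≤ k) (hkn : k ≤ n - 1)
    (θ : ℝ) (hθ : θ ∈ Set.Icc 0 (π / 2))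
    (γ : ℝ) (hγ : 0 < γ)
    (ℓ : ℝ → ℝ) (hℓmeas : Measurable ℓ) (hℓpos : ∀ᶠ t in atTop, 0 < ℓ t)
    (hℓslow : SlowlyVarying ℓ) (hℓγ : Tendsto ℓ atTop (nhds γ))
    (q : ℝ → ℝ) (hq : ∀ t, q t = ℓ t / t)
    (Bfun : ℝ → ℝ → ℝ)
    (hBfun : ∀ p q', Bfun p q' = Real.Gamma p * Real.Gamma q' / Real.Gamma (p + q'))
    (fk : ℝ → ℝ)
    (hfk : ∀ y, fk y = y ^ ((k : ℝ) / 2 - 1) * (1 - y) ^ (((n : ℝ) - k) / 2 - 1) /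
      Bfun ((k : ℝ) / 2) (((n : ℝ) - k) / 2))
    (Dk : ℝ → ℝ → ℝ)
    (hDk : ∀ θ' c, Dk θ' c = ∫ y in (0 : ℝ)..(Real.cos θ' ^ 2),
      Real.exp (-∫ t in (c ^ 2)..(c ^ 2 / y), q t) * fk y) :
    Tendsto (fun c => Dk θ c) atTop
      (nhds ((Bfun (γ + (k : ℝ) / 2) (((n : ℝ) - k) / 2) /
          Bfun ((k : ℝ) / 2) (((n : ℝ) - k) / 2)) *
        ∫ y in (0 : ℝ)..(Real.cos θ ^ 2),
          y ^ (γ + (k : ℝ) / 2 - 1) * (1 - y) ^ (((n : ℝ) - k) / 2 - 1) /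
            Bfun (γ + (k : ℝ) / 2) (((n : ℝ) - k) / 2))) := by
  -- basic positivity facts
  have hk' : (1 : ℝ) ≤ (k : ℝ) := by exact_mod_cast hk1
  have hkn' : k + 1 ≤ n := by omega
  have hnk : (1 : ℝ) ≤ (n : ℝ) - k := by
    have : ((k : ℝ) + 1) ≤ n := by exact_mod_cast hkn'
    linarith
  have hA : 0 < (k : ℝ) / 2 := by linarith
  have hB : 0 < ((n : ℝ) - k) / 2 := by linarith
  have hBk : 0 < Bfun ((k : ℝ) / 2) (((n : ℝ) - k) / 2) := by
    rw [hBfun]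
    exact div_pos (mul_pos (Real.Gamma_pos_of_pos hA) (Real.Gamma_pos_of_pos hB))
      (Real.Gamma_pos_of_pos (by linarith))
  have hBγ : 0 < Bfun (γ + (k : ℝ) / 2) (((n : ℝ) - k) / 2) := by
    rw [hBfun]
    exact div_pos (mul_pos (Real.Gamma_pos_of_pos (by linarith)) (Real.Gamma_pos_of_pos hB))
      (Real.Gamma_pos_of_pos (by linarith))
  set m : ℝ := Real.cos θ ^ 2 with hmdef
  have hm0 : 0 ≤ m := sq_nonneg _
  have hm1 : m ≤ 1 := by
    have h1 : Real.cos θ ≤ 1 := Real.cos_le_one θ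
    have h2 : -1 ≤ Real.cos θ := Real.neg_one_le_cos θ
    nlinarith
  -- Step A: rewrite the limit value
  have key : (Bfun (γ + (k : ℝ) / 2) (((n : ℝ) - k) / 2) /
          Bfun ((k : ℝ) / 2) (((n : ℝ) - k) / 2)) *
        (∫ y in (0 : ℝ)..m,
          y ^ (γ + (k : ℝ) / 2 - 1) * (1 - y) ^ (((n : ℝ) - k) / 2 - 1) /
            Bfun (γ + (k : ℝ) / 2) (((n : ℝ) - k) / 2))
      = ∫ y in Set.Ioc (0 : ℝ) m, y ^ γ * fk y := by
    rw [intervalIntegral.integral_of_le hm0, ← integral_const_mul]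
    apply setIntegral_congr_fun measurableSet_Ioc
    intro y hy
    have hy0 : 0 < y := hy.1
    have hsplit : y ^ (γ + (k : ℝ) / 2 - 1) = y ^ γ * y ^ ((k : ℝ) / 2 - 1) := by
      rw [← Real.rpow_add hy0]; ring_nf
    dsimp only
    have h2 : ∀ X : ℝ, Bfun (γ + (k : ℝ) / 2) (((n : ℝ) - k) / 2) /
        Bfun ((k : ℝ) / 2) (((n : ℝ) - k) / 2) *
        (X / Bfun (γ + (k : ℝ) / 2) (((n : ℝ) - k) / 2)) =
        X / Bfun ((k : ℝ) / 2) (((n : ℝ) - k) / 2) := by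
      intro X
      rw [div_mul_div_comm, mul_comm _ X, mul_div_mul_right _ _ hBγ.ne']
    rw [hfk, hsplit, h2, mul_assoc, mul_div_assoc]
  rw [key]
  -- Step B: dominated convergence
  simp only [hDk]
  have hmrw : ∀ c : ℝ, (∫ y in (0 : ℝ)..m,
      Real.exp (-∫ t in (c ^ 2)..(c ^ 2 / y), q t) * fk y)
      = ∫ y in Set.Ioc (0 : ℝ) m,
      Real.exp (-∫ t in (c ^ 2)..(c ^ 2 / y), q t) * fk y := fun c =>
    intervalIntegral.integral_of_le hm0
  simp only [← hmdef, hmrw]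
  -- thresholds
  have hq_meas : Measurable q := by
    have : q = fun t => ℓ t / t := funext hq
    rw [this]; exact hℓmeas.div measurable_id
  have hbnd : ∀ᶠ t in atTop, |ℓ t - γ| < 1 := by
    have := Metric.tendsto_nhds.mp hℓγ 1 one_pos
    simpa [Real.dist_eq] using this
  obtain ⟨T₀, hT₀⟩ := eventually_atTop.mp (hℓpos.and hbnd)
  set T : ℝ := max T₀ 1 with hTdef
  have hT1 : (1 : ℝ) ≤ T := le_max_right _ _
  have hT : ∀ t, T ≤ t → 0 < ℓ t ∧ |ℓ t - γ| < 1 :=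
    fun t ht => hT₀ t (le_trans (le_max_left _ _) ht)
  -- properties of q on [T, ∞)
  have hq_nonneg : ∀ t, T ≤ t → 0 ≤ q t := by
    intro t ht
    rw [hq]
    exact div_nonneg (hT t ht).1.le (by linarith [le_trans hT1 ht])
  have hq_bdd : ∀ t, T ≤ t → |q t| ≤ γ + 1 := by
    intro t ht
    have ht1 : (1 : ℝ) ≤ t := le_trans hT1 ht
    have hl : |ℓ t| ≤ γ + 1 := by
      have := (hT t ht).2
      rw [abs_sub_lt_iff] at this
      rw [abs_le]; constructor <;> nlinarith [this.1, this.2]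
    rw [hq, abs_div, abs_of_pos (by linarith : (0:ℝ) < t)]
    calc |ℓ t| / t ≤ (γ + 1) / t := by
          apply div_le_div_of_nonneg_right hl (by linarith)
      _ ≤ (γ + 1) / 1 := by
          apply div_le_div_of_nonneg_left (by linarith) (by linarith) ht1
      _ = γ + 1 := div_one _

  -- truncated integrand
  set qT : ℝ → ℝ := fun t => if T ≤ t then q t else 0 with hqTdef
  have hqT_meas : Measurable qT :=
    Measurable.ite (measurableSet_le measurable_const measurable_id) hq_meas measurable_const
  have hqT_int : ∀ A B : ℝ, IntervalIntegrable qT volume A B := by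
    intro A B
    rw [intervalIntegrable_iff]
    refine Integrable.mono' (g := fun _ => γ + 1) ?_ hqT_meas.aestronglyMeasurable.restrict ?_
    · refine (integrableOn_const_iff).mpr (Or.inr ?_)
      rw [Set.uIoc]
      exact measure_Ioc_lt_top
    · filter_upwards with t
      show ‖qT t‖ ≤ γ + 1
      rw [Real.norm_eq_abs, hqTdef]
      dsimp only
      split_ifs with h
      · exact hq_bdd t h
      · simp; linarith
  have hcy_le : ∀ {c y : ℝ}, 0 < c → y ∈ Set.Ioc (0 : ℝ) m → c ^ 2 ≤ c ^ 2 / y := by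
    intro c y hc hy
    rw [le_div_iff₀ hy.1]
    nlinarith [hy.2.trans hm1, sq_nonneg c]
  have hiq : ∀ {c y : ℝ}, T ≤ c ^ 2 → 0 < c → y ∈ Set.Ioc (0 : ℝ) m →
      (∫ t in (c ^ 2)..(c ^ 2 / y), q t) = ∫ t in (c ^ 2)..(c ^ 2 / y), qT t := by
    intro c y hTc hc hy
    apply intervalIntegral.integral_congr
    intro t ht
    rw [Set.uIcc_of_le (hcy_le hc hy)] at ht
    have hTt : T ≤ t := le_trans hTc ht.1
    show q t = qT t
    rw [hqTdef]
    simp [hTt]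
  have hq_intble : ∀ {A B : ℝ}, T ≤ A → A ≤ B → IntervalIntegrable q volume A B := by
    intro A B hTA hAB
    have h1 := hqT_int A B
    rw [intervalIntegrable_iff] at h1 ⊢
    refine h1.congr_fun ?_ measurableSet_uIoc
    intro t ht
    rw [Set.uIoc_of_le hAB] at ht
    have hTt : T ≤ t := le_trans hTA ht.1.le
    show qT t = q t
    rw [hqTdef]
    simp [hTt]
  have hfk_meas : Measurable fk := by
    have hrw : fk = fun y => y ^ ((k : ℝ) / 2 - 1) * (1 - y) ^ (((n : ℝ) - k) / 2 - 1) /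
        Bfun ((k : ℝ) / 2) (((n : ℝ) - k) / 2) := funext hfk
    rw [hrw]; fun_prop
  have hfk_nonneg : ∀ y ∈ Set.Ioc (0 : ℝ) m, 0 ≤ fk y := by
    intro y hy
    rw [hfk]
    have h1 : (0 : ℝ) ≤ 1 - y := by linarith [hy.2.trans hm1]
    have h0 : (0 : ℝ) ≤ y := hy.1.le
    positivity
  refine tendsto_integral_filter_of_dominated_convergence fk ?_ ?_ ?_ ?_
  · -- a.e. strong measurability
    filter_upwards [eventually_ge_atTop (max 1 T)] with c hc
    have hc1 : (1 : ℝ) ≤ c := le_trans (le_max_left _ _) hc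
    have hc0 : (0 : ℝ) < c := by linarith
    have hcT : T ≤ c ^ 2 := by nlinarith [le_trans (le_max_right _ _) hc]
    have hcont : ContinuousOn
        (fun y => Real.exp (-∫ t in (c ^ 2)..(c ^ 2 / y), qT t)) (Set.Ioc (0 : ℝ) m) := by
      apply Real.continuous_exp.comp_continuousOn
      apply ContinuousOn.neg
      exact (intervalIntegral.continuous_primitive hqT_int (c ^ 2)).comp_continuousOn
        (continuousOn_const.div continuousOn_id (fun y hy => ne_of_gt hy.1))
    refine AEStronglyMeasurable.congr
      ((hcont.aestronglyMeasurable measurableSet_Ioc).mul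
        hfk_meas.aestronglyMeasurable.restrict) ?_
    filter_upwards [ae_restrict_mem measurableSet_Ioc] with y hy
    rw [Pi.mul_apply, hiq hcT hc0 hy]
  · -- bound
    filter_upwards [eventually_ge_atTop (max 1 T)] with c hc
    have hc1 : (1 : ℝ) ≤ c := le_trans (le_max_left _ _) hc
    have hc0 : (0 : ℝ) < c := by linarith
    have hcT : T ≤ c ^ 2 := by nlinarith [le_trans (le_max_right _ _) hc]
    filter_upwards [ae_restrict_mem measurableSet_Ioc] with y hy
    have hI : 0 ≤ ∫ t in (c ^ 2)..(c ^ 2 / y), q t := by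
      apply intervalIntegral.integral_nonneg (hcy_le hc0 hy)
      intro u hu
      exact hq_nonneg u (le_trans hcT hu.1)
    rw [norm_mul, Real.norm_eq_abs, Real.norm_eq_abs, abs_of_pos (Real.exp_pos _),
      abs_of_nonneg (hfk_nonneg y hy)]
    exact mul_le_of_le_one_left (hfk_nonneg y hy)
      (Real.exp_le_one_iff.mpr (neg_nonpos.mpr hI))
  · -- bound integrable
    have h1 : IntegrableOn
        (fun y : ℝ => y ^ ((k : ℝ) / 2 - 1) * (1 - y) ^ (((n : ℝ) - k) / 2 - 1))
        (Set.Ioc (0 : ℝ) 1) := (realBeta_intervalIntegrable hA hB).1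
    have h2 := (h1.mono_set (Set.Ioc_subset_Ioc_right hm1)).div_const
      (Bfun ((k : ℝ) / 2) (((n : ℝ) - k) / 2))
    have h3 : Set.EqOn (fun y : ℝ => y ^ ((k : ℝ) / 2 - 1) * (1 - y) ^ (((n : ℝ) - k) / 2 - 1) /
        Bfun ((k : ℝ) / 2) (((n : ℝ) - k) / 2)) fk (Set.Ioc (0 : ℝ) m) :=
      fun y _ => (hfk y).symm
    exact MeasureTheory.IntegrableOn.congr_fun h2 h3 measurableSet_Ioc
  · -- pointwise limit
    filter_upwards [ae_restrict_mem measurableSet_Ioc] with y hy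
    have hy0 : 0 < y := hy.1
    have hy1 : y ≤ 1 := hy.2.trans hm1
    have main : Tendsto (fun c : ℝ => ∫ t in (c ^ 2)..(c ^ 2 / y), q t) atTop
        (𝓝 (-(γ * Real.log y))) := by
      rw [Metric.tendsto_atTop]
      intro ε hε
      have hε' : 0 < ε * y / 2 := by positivity
      obtain ⟨T₂, hT₂⟩ := eventually_atTop.mp (Metric.tendsto_nhds.mp hℓγ _ hε')
      refine ⟨max 1 (max T T₂), fun c hc => ?_⟩
      have hc1 : (1 : ℝ) ≤ c := le_trans (le_max_left _ _) hc
      have hc0 : (0 : ℝ) < c := by linarith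
      have hc2 : (0 : ℝ) < c ^ 2 := by positivity
      have hTc : T ≤ c := le_trans (le_max_left T T₂) (le_trans (le_max_right _ _) hc)
      have hT2c : T₂ ≤ c := le_trans (le_max_right T T₂) (le_trans (le_max_right _ _) hc)
      have hcT : T ≤ c ^ 2 := by nlinarith
      have hcT₂ : T₂ ≤ c ^ 2 := by nlinarith
      have hle : c ^ 2 ≤ c ^ 2 / y := hcy_le hc0 hy
      have h0uIcc : (0 : ℝ) ∉ Set.uIcc (c ^ 2) (c ^ 2 / y) := by
        rw [Set.uIcc_of_le hle]
        intro h0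
        exact absurd h0.1 (not_le.mpr hc2)
      have hlog : (∫ t in (c ^ 2)..(c ^ 2 / y), γ * t⁻¹) = -(γ * Real.log y) := by
        rw [intervalIntegral.integral_const_mul, integral_inv h0uIcc]
        have hsimp : c ^ 2 / y / c ^ 2 = y⁻¹ := by
          rw [div_div, mul_comm y (c ^ 2), ← div_div, div_self hc2.ne', one_div]
        rw [hsimp, Real.log_inv, mul_neg]
      have hqint : IntervalIntegrable q volume (c ^ 2) (c ^ 2 / y) := hq_intble hcT hle
      have hinvint : IntervalIntegrable (fun t : ℝ => γ * t⁻¹) volume (c ^ 2) (c ^ 2 / y) := by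
        apply ContinuousOn.intervalIntegrable
        refine continuousOn_const.mul (continuousOn_inv₀.mono ?_)
        intro t ht
        simp only [Set.mem_compl_iff, Set.mem_singleton_iff]
        rintro rfl
        exact h0uIcc ht
      have hsub : (∫ t in (c ^ 2)..(c ^ 2 / y), q t) - (-(γ * Real.log y)) =
          ∫ t in (c ^ 2)..(c ^ 2 / y), (q t - γ * t⁻¹) := by
        rw [intervalIntegral.integral_sub hqint hinvint, hlog]
      rw [Real.dist_eq, hsub]
      have hbound : |∫ t in (c ^ 2)..(c ^ 2 / y), (q t - γ * t⁻¹)| ≤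
          (ε * y / 2 / c ^ 2) * |c ^ 2 / y - c ^ 2| := by
        rw [← Real.norm_eq_abs]
        apply intervalIntegral.norm_integral_le_of_norm_le_const
        intro t ht
        rw [Set.uIoc_of_le hle] at ht
        have ht0 : c ^ 2 < t := ht.1
        have htpos : 0 < t := lt_trans hc2 ht0
        have hdist : |ℓ t - γ| ≤ ε * y / 2 := by
          have h := hT₂ t (le_trans hcT₂ ht0.le)
          rw [Real.dist_eq] at h; exact h.le
        rw [Real.norm_eq_abs, hq]
        have heq : ℓ t / t - γ * t⁻¹ = (ℓ t - γ) / t := by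
          rw [sub_div, div_eq_mul_inv γ t]
        rw [heq, abs_div, abs_of_pos htpos]
        calc |ℓ t - γ| / t ≤ (ε * y / 2) / t := by gcongr
          _ ≤ (ε * y / 2) / c ^ 2 := by gcongr
      have habs : |c ^ 2 / y - c ^ 2| ≤ c ^ 2 / y := by
        rw [abs_of_nonneg (by linarith)]
        linarith [hc2.le]
      have hfin : (ε * y / 2 / c ^ 2) * (c ^ 2 / y) = ε / 2 := by
        field_simp
      calc |∫ t in (c ^ 2)..(c ^ 2 / y), (q t - γ * t⁻¹)|
          ≤ (ε * y / 2 / c ^ 2) * |c ^ 2 / y - c ^ 2| := hbound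
        _ ≤ (ε * y / 2 / c ^ 2) * (c ^ 2 / y) :=
            mul_le_mul_of_nonneg_left habs (by positivity)
        _ = ε / 2 := hfin
        _ < ε := by linarith
    have hexp : Tendsto (fun c : ℝ => Real.exp (-∫ t in (c ^ 2)..(c ^ 2 / y), q t)) atTop
        (𝓝 (y ^ γ)) := by
      have h1 : Tendsto (fun c : ℝ => -∫ t in (c ^ 2)..(c ^ 2 / y), q t) atTop
          (𝓝 (γ * Real.log y)) := by simpa using main.neg
      have h2 := (Real.continuous_exp.tendsto _).comp h1
      rw [show Real.exp (γ * Real.log y) = y ^ γ from by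
        rw [Real.rpow_def_of_pos hy0, mul_comm]] at h2
      exact h2
    exact hexp.mul_const _
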